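/- Let f : ℝⁿ → ℝ be twice continuously differentiable with L₂-Lipschitz Hessian, let x ∈ ℝⁿ, g = ∇f(x), H = ∇²f(x), T(s) = f(x) + gᵀs + (1/2)sᵀHs, and for σ > 0 let m(s) = T(s) + (σ/3)‖s‖³. Let η₁ ∈ (0,1) and let s ∈ ℝⁿ satisfy m(s) < m(0). If σ ≥ L₂/(2(1 − η₁)), then f(x) − f(x+s) ≥ η₁ (T(0) − T(s)), i.e. the iteration is successful. -/

import Mathlib

open RealInnerProductSpace
open Set


set_option maxHeartbeats 1000000 in
/-- First-order Taylor bound for the gradient under Lipschitz Hessian. -/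
lemma grad_taylor_bound {n : ℕ} (f : EuclideanSpace ℝ (Fin n) → ℝ) (L₂ : ℝ)
    (hf : ContDiff ℝ 2 f)
    (hLip : ∀ y z : EuclideanSpace ℝ (Fin n),
      ‖fderiv ℝ (gradient f) y - fderiv ℝ (gradient f) z‖ ≤ L₂ * ‖y - z‖)
    (x u : EuclideanSpace ℝ (Fin n)) :
    ‖gradient f (x + u) - gradient f x - fderiv ℝ (gradient f) x u‖ ≤ L₂ / 2 * ‖u‖ ^ 2 := by
  have hgrad : ContDiff ℝ 1 (gradient f) :=
    ((InnerProductSpace.toDual ℝ (EuclideanSpace ℝ (Fin n))).symm.contDiff).comp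
      (hf.fderiv_right (by norm_num))
  have hgd : ∀ y, HasFDerivAt (gradient f) (fderiv ℝ (gradient f) y) y :=
    fun y => (hgrad.differentiable (by norm_num) y).hasFDerivAt
  set H := fun y => fderiv ℝ (gradient f) y with hH
  set G : ℝ → EuclideanSpace ℝ (Fin n) :=
    fun t => gradient f (x + t • u) - gradient f x - t • (H x u) with hGdef
  have hline : ∀ t : ℝ, HasDerivAt (fun t : ℝ => x + t • u) u t := by
    intro t
    simpa using ((hasDerivAt_id t).smul_const u).const_add x
  have hG' : ∀ t : ℝ, HasDerivAt G (H (x + t • u) u - H x u) t := by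
    intro t
    have h1 : HasDerivAt (fun t : ℝ => gradient f (x + t • u)) (H (x + t • u) u) t :=
      by have := (hgd (x + t • u)).comp_hasDerivAt t (hline t); exact this
    have h2 : HasDerivAt (fun t : ℝ => t • (H x u)) (H x u) t := by
      simpa using (hasDerivAt_id t).smul_const (H x u)
    have := (h1.sub_const (gradient f x)).sub h2
    exact this
  have hB : ∀ t : ℝ, HasDerivAt (fun t => L₂ / 2 * t ^ 2 * ‖u‖ ^ 2) (L₂ * t * ‖u‖ ^ 2) t := by
    intro t
    have := ((hasDerivAt_pow 2 t).const_mul (L₂ / 2)).mul_const (‖u‖ ^ 2)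
    refine this.congr_deriv ?_
    ring
  have key := image_norm_le_of_norm_deriv_right_le_deriv_boundary
    (f := G) (f' := fun t => H (x + t • u) u - H x u) (a := 0) (b := 1)
    (fun t _ => ((hG' t).continuousAt).continuousWithinAt)
    (fun t _ => (hG' t).hasDerivWithinAt)
    (B := fun t => L₂ / 2 * t ^ 2 * ‖u‖ ^ 2) (B' := fun t => L₂ * t * ‖u‖ ^ 2)
    (by simp [hGdef]) hB
    (by
      intro t ht
      have h1 : ‖H (x + t • u) u - H x u‖ ≤ ‖H (x + t • u) - H x‖ * ‖u‖ := by
        rw [← ContinuousLinearMap.sub_apply]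
        exact (H (x + t • u) - H x).le_opNorm u
      have h2 : ‖H (x + t • u) - H x‖ ≤ L₂ * ‖t • u‖ := by
        have := hLip (x + t • u) x
        rwa [add_sub_cancel_left] at this
      have h3 : ‖t • u‖ = t * ‖u‖ := by
        rw [norm_smul, Real.norm_eq_abs, abs_of_nonneg ht.1]
      have hu : 0 ≤ ‖u‖ := norm_nonneg u
      calc ‖H (x + t • u) u - H x u‖ ≤ ‖H (x + t • u) - H x‖ * ‖u‖ := h1
        _ ≤ L₂ * (t * ‖u‖) * ‖u‖ := by
            rw [← h3]; exact mul_le_mul_of_nonneg_right h2 hu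
        _ = L₂ * t * ‖u‖ ^ 2 := by ring)
    (x := 1) (by norm_num)
  simpa [hGdef] using key

set_option maxHeartbeats 1000000 in
/-- Second-order Taylor bound for `f` under Lipschitz Hessian. -/
lemma taylor_bound {n : ℕ} (f : EuclideanSpace ℝ (Fin n) → ℝ) (L₂ : ℝ)
    (hf : ContDiff ℝ 2 f)
    (hLip : ∀ y z : EuclideanSpace ℝ (Fin n),
      ‖fderiv ℝ (gradient f) y - fderiv ℝ (gradient f) z‖ ≤ L₂ * ‖y - z‖)
    (x s : EuclideanSpace ℝ (Fin n)) :
    |f (x + s) - f x - ⟪gradient f x, s⟫ -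
      (1 / 2) * ⟪s, fderiv ℝ (gradient f) x s⟫| ≤ L₂ / 6 * ‖s‖ ^ 3 := by
  set H := fun y => fderiv ℝ (gradient f) y with hH
  have hinner : ∀ y, ⟪gradient f y, s⟫ = fderiv ℝ f y s := by
    intro y
    rw [← InnerProductSpace.toDual_apply_apply]; simp [gradient]
  have hdiff : Differentiable ℝ f := hf.differentiable (by norm_num)
  have hline : ∀ t : ℝ, HasDerivAt (fun t : ℝ => x + t • s) s t := by
    intro t
    simpa using ((hasDerivAt_id t).smul_const s).const_add x
  set ψ : ℝ → ℝ := fun t =>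
    f (x + t • s) - f x - t * ⟪gradient f x, s⟫ - t ^ 2 / 2 * ⟪s, H x s⟫ with hψdef
  have hψ' : ∀ t : ℝ, HasDerivAt ψ
      (⟪gradient f (x + t • s), s⟫ - ⟪gradient f x, s⟫ - t * ⟪s, H x s⟫) t := by
    intro t
    have h1 : HasDerivAt (fun t : ℝ => f (x + t • s)) (fderiv ℝ f (x + t • s) s) t :=
      (hdiff (x + t • s)).hasFDerivAt.comp_hasDerivAt t (hline t)
    have h2 : HasDerivAt (fun t : ℝ => t * ⟪gradient f x, s⟫) ⟪gradient f x, s⟫ t := by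
      simpa using (hasDerivAt_id t).mul_const (⟪gradient f x, s⟫)
    have h3 : HasDerivAt (fun t : ℝ => t ^ 2 / 2 * ⟪s, H x s⟫) (t * ⟪s, H x s⟫) t := by
      have := ((hasDerivAt_pow 2 t).div_const 2).mul_const (⟪s, H x s⟫)
      refine this.congr_deriv ?_
      ring
    have := ((h1.sub_const (f x)).sub h2).sub h3
    rw [hinner (x + t • s)]
    exact this
  have hB : ∀ t : ℝ, HasDerivAt (fun t => L₂ / 6 * t ^ 3 * ‖s‖ ^ 3)
      (L₂ / 2 * t ^ 2 * ‖s‖ ^ 3) t := by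
    intro t
    have := ((hasDerivAt_pow 3 t).const_mul (L₂ / 6)).mul_const (‖s‖ ^ 3)
    refine this.congr_deriv ?_
    ring
  have key := image_norm_le_of_norm_deriv_right_le_deriv_boundary
    (f := ψ)
    (f' := fun t => ⟪gradient f (x + t • s), s⟫ - ⟪gradient f x, s⟫ - t * ⟪s, H x s⟫)
    (a := 0) (b := 1)
    (fun t _ => ((hψ' t).continuousAt).continuousWithinAt)
    (fun t _ => (hψ' t).hasDerivWithinAt)
    (B := fun t => L₂ / 6 * t ^ 3 * ‖s‖ ^ 3) (B' := fun t => L₂ / 2 * t ^ 2 * ‖s‖ ^ 3)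
    (by simp [hψdef]) hB
    (by
      intro t ht
      have heq : ⟪gradient f (x + t • s), s⟫ - ⟪gradient f x, s⟫ - t * ⟪s, H x s⟫
          = ⟪gradient f (x + t • s) - gradient f x - H x (t • s), s⟫ := by
        rw [inner_sub_left, inner_sub_left, map_smul]
        rw [real_inner_smul_left, real_inner_comm s (H x s)]
      beta_reduce
      rw [Real.norm_eq_abs, heq]
      have h1 : |⟪gradient f (x + t • s) - gradient f x - H x (t • s), s⟫|
          ≤ ‖gradient f (x + t • s) - gradient f x - H x (t • s)‖ * ‖s‖ :=
        abs_real_inner_le_norm _ _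
      have h2 := grad_taylor_bound f L₂ hf hLip x (t • s)
      have h3 : ‖t • s‖ = t * ‖s‖ := by
        rw [norm_smul, Real.norm_eq_abs, abs_of_nonneg ht.1]
      calc |⟪gradient f (x + t • s) - gradient f x - H x (t • s), s⟫|
          ≤ ‖gradient f (x + t • s) - gradient f x - H x (t • s)‖ * ‖s‖ := h1
        _ ≤ (L₂ / 2 * ‖t • s‖ ^ 2) * ‖s‖ :=
            mul_le_mul_of_nonneg_right h2 (norm_nonneg s)
        _ = L₂ / 2 * t ^ 2 * ‖s‖ ^ 3 := by rw [h3]; ring)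
    (x := 1) (by norm_num)
  have : ψ 1 = f (x + s) - f x - ⟪gradient f x, s⟫ - (1 / 2) * ⟪s, H x s⟫ := by
    simp [hψdef]
  rw [← this]
  simpa using key


/-- If the step `s` decreases the cubic model, `m(s) < m(0)`, and
`σ ≥ L₂/(2(1-η₁))`, then the iteration is successful:
`f(x) - f(x+s) ≥ η₁(T(0) - T(s))`. -/
theorem successful_iteration_cubic_model_step
    (n : ℕ) (f : EuclideanSpace ℝ (Fin n) → ℝ) (L₂ : ℝ) (hL₂ : 0 < L₂)
    (hf : ContDiff ℝ 2 f)
    (hLip : ∀ y z : EuclideanSpace ℝ (Fin n),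
      ‖fderiv ℝ (gradient f) y - fderiv ℝ (gradient f) z‖ ≤ L₂ * ‖y - z‖)
    (x : EuclideanSpace ℝ (Fin n))
    (T m : EuclideanSpace ℝ (Fin n) → ℝ)
    (hT : ∀ s : EuclideanSpace ℝ (Fin n),
      T s = f x + ⟪gradient f x, s⟫ + (1 / 2) * ⟪s, fderiv ℝ (gradient f) x s⟫)
    (σ : ℝ) (hσ : 0 < σ)
    (hm : ∀ s : EuclideanSpace ℝ (Fin n), m s = T s + (σ / 3) * ‖s‖ ^ 3)
    (η₁ : ℝ) (hη₁ : η₁ ∈ Set.Ioo (0 : ℝ) 1)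
    (s : EuclideanSpace ℝ (Fin n))
    (hdec : m s < m 0)
    (hσbig : σ ≥ L₂ / (2 * (1 - η₁))) :
    f x - f (x + s) ≥ η₁ * (T 0 - T s) := by
  obtain ⟨hη₁0, hη₁1⟩ := hη₁
  have hT0 : T 0 = f x := by rw [hT 0]; simp
  have hdec' : T s + σ / 3 * ‖s‖ ^ 3 < T 0 := by
    have := hdec
    rw [hm s, hm 0, hT0, norm_zero] at this
    simpa [hT0] using this
  have htay := taylor_bound f L₂ hf hLip x s
  have hts : f (x + s) - T s ≤ L₂ / 6 * ‖s‖ ^ 3 := by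
    have := (abs_le.mp htay).2
    rw [hT s]
    linarith
  have hN : (0:ℝ) ≤ ‖s‖ ^ 3 := by positivity
  have hσ' : σ * (2 * (1 - η₁)) ≥ L₂ := by
    rw [ge_iff_le, div_le_iff₀ (by linarith)] at hσbig
    linarith
  nlinarith [mul_le_mul_of_nonneg_left hts (le_of_lt hη₁0),
    mul_nonneg (mul_nonneg (le_of_lt hσ) (sub_pos.mpr hη₁1).le) hN,
    mul_le_mul_of_nonneg_right hσ' hN,
    mul_lt_mul_of_pos_left hdec' hη₁0]
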